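/- Let W : ℤ → K be an elliptic net of rank 1 (elliptic divisibility sequence). For any fixed integer l, the map W_l : ℤ → K defined by W_l(n) = W(ln)/W(l)^{n²} (assuming W(l) ≠ 0) is again an elliptic divisibility sequence; equivalently, W(ln) = W_l(n)·W(l)^{n²} where W_l satisfies the EDS recurrence. -/

import Mathlib

/-- Scaling an EDS along a sublattice: `Wₗ(n) = W(ln)/W(l)^(n²)` is again an EDS, and
`W(ln) = Wₗ(n)·W(l)^(n²)`. -/
theorem eds_scaling (K : Type*) [Field K] (W : ℤ → K)
    (hrec : ∀ n m : ℤ, W (n + m) * W (n - m) =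
      W (n + 1) * W (n - 1) * W m ^ 2 - W (m + 1) * W (m - 1) * W n ^ 2)
    (l : ℤ) (hl : W l ≠ 0)
    (Wl : ℤ → K) (hWl : ∀ n : ℤ, Wl n = W (l * n) / W l ^ (n ^ 2)) :
    (∀ n m : ℤ, Wl (n + m) * Wl (n - m) =
      Wl (n + 1) * Wl (n - 1) * Wl m ^ 2 - Wl (m + 1) * Wl (m - 1) * Wl n ^ 2) ∧
    (∀ n : ℤ, W (l * n) = Wl n * W l ^ (n ^ 2)) := by
  constructor
  · intro n m
    -- the three-variable elliptic identity, a formal consequence of the two-variable one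
    have key : ∀ a b c : ℤ, W (a + b) * W (a - b) * W c ^ 2 =
        W (a + c) * W (a - c) * W b ^ 2 - W (b + c) * W (b - c) * W a ^ 2 := by
      intro a b c
      linear_combination (W c) ^ 2 * hrec a b - (W b) ^ 2 * hrec a c + (W a) ^ 2 * hrec b c
    have hk := key (l * n) (l * m) l
    simp only [← mul_add, ← mul_sub, ← mul_add_one, ← mul_sub_one] at hk
    have h0 : ∀ k : ℤ, W l ^ k ≠ 0 := fun k => zpow_ne_zero k hl
    simp only [hWl]
    field_simp [h0]
    simp only [← zpow_natCast, ← zpow_mul, ← zpow_add₀ hl]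
    push_cast
    have e1 : W l ^ ((n + 1) ^ 2) * W l ^ ((n - 1) ^ 2) * W l ^ (m ^ 2 * 2)
        = W l ^ (2 * n ^ 2 + 2 * m ^ 2) * W l ^ 2 := by
      rw [← zpow_add₀ hl, ← zpow_add₀ hl, ← zpow_natCast, ← zpow_add₀ hl]
      congr 1; push_cast; ring
    have e2 : W l ^ ((m + 1) ^ 2) * W l ^ ((m - 1) ^ 2) * W l ^ (n ^ 2 * 2)
        = W l ^ (2 * n ^ 2 + 2 * m ^ 2) * W l ^ 2 := by
      rw [← zpow_add₀ hl, ← zpow_add₀ hl, ← zpow_natCast, ← zpow_add₀ hl]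
      congr 1; push_cast; ring
    have e3 : W l ^ ((n + 1) ^ 2 + (n - 1) ^ 2 + m ^ 2 * 2)
        = W l ^ (2 * n ^ 2 + 2 * m ^ 2) * W l ^ 2 := by
      rw [← zpow_natCast, ← zpow_add₀ hl]
      congr 1; push_cast; ring
    have hk' : W (l * (n + m)) * W (l * (n - m)) * W l ^ 2 =
        W (l * (n + 1)) * W (l * (n - 1)) * W (l * m) ^ 2
          - W (l * (m + 1)) * W (l * (m - 1)) * W (l * n) ^ 2 := by
      have := key (l * n) (l * m) l
      rw [show l * n + l * m = l * (n + m) by ring, show l * n - l * m = l * (n - m) by ring,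
        show l * n + l = l * (n + 1) by ring, show l * n - l = l * (n - 1) by ring,
        show l * m + l = l * (m + 1) by ring, show l * m - l = l * (m - 1) by ring] at this
      exact this
    rw [e3, show (n + m) ^ 2 + (n - m) ^ 2 = 2 * n ^ 2 + 2 * m ^ 2 by ring]
    generalize W l ^ (2 * n ^ 2 + 2 * m ^ 2) = S at e1 e2 ⊢
    generalize W l ^ ((n + 1) ^ 2) = a at e1 ⊢
    generalize W l ^ ((n - 1) ^ 2) = b at e1 ⊢
    generalize W l ^ (m ^ 2 * 2) = c at e1 ⊢
    generalize W l ^ ((m + 1) ^ 2) = d at e2 ⊢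
    generalize W l ^ ((m - 1) ^ 2) = e at e2 ⊢
    generalize W l ^ (n ^ 2 * 2) = f at e2 ⊢
    generalize W (l * (n + 1)) = A1 at hk' ⊢
    generalize W (l * (n - 1)) = A2 at hk' ⊢
    generalize W (l * m) = A3 at hk' ⊢
    generalize W (l * (m + 1)) = B1 at hk' ⊢
    generalize W (l * (m - 1)) = B2 at hk' ⊢
    generalize W (l * n) = B3 at hk' ⊢
    simp only [zpow_ofNat] at hk' ⊢
    linear_combination W (l * (n + m)) * W (l * (n - m))
        * (d * e * f) * e1
      + (W (l * (n + m)) * W (l * (n - m)) * S * W l ^ 2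
        - S * (A1 * A2 * A3 ^ 2)) * e2
      + (S) ^ 2 * W l ^ 2 * hk'
  · intro n
    rw [hWl, div_mul_cancel₀]
    exact zpow_ne_zero _ hl
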